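/- For every h in (0, 1/4), the quantity -(1+8h)√(1-4h) + (1-2h+16h²)·log((1+√(1-4h))/(1-√(1-4h))) is strictly greater than (1/3)(1-4h)²(5-8h)√(1-4h), and hence is strictly positive. -/

import Mathlib

open Real

/-- Lower bound for `log ((1+s)/(1-s))` by a Taylor partial sum. -/
lemma log_ratio_lower (s : ℝ) (hs0 : 0 < s) (hs1 : s < 1) :
    Real.log ((1 + s) / (1 - s)) > 2 * (s + s^3/3 + s^5/5 + s^7/7) := by
  set F : ℝ → ℝ := fun x => Real.log (1 + x) - Real.log (1 - x)
      - 2 * (x + x^3/3 + x^5/5 + x^7/7) with hF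
  have hderiv : ∀ x ∈ Set.Ioo (0:ℝ) 1, 0 < deriv F x := by
    intro x hx
    obtain ⟨hx0, hx1⟩ := hx
    have ha : (1:ℝ) + x ≠ 0 := by nlinarith
    have hb : (1:ℝ) - x ≠ 0 := by nlinarith
    have d1 : HasDerivAt (fun y : ℝ => Real.log (1 + y)) (1 / (1 + x)) x := by
      have := ((hasDerivAt_id x).const_add 1).log ha
      simpa using this
    have d2 : HasDerivAt (fun y : ℝ => Real.log (1 - y)) (-1 / (1 - x)) x := by
      have := ((hasDerivAt_id x).const_sub 1).log hb
      simpa using this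
    have d3 : HasDerivAt (fun y : ℝ => 2 * (y + y^3/3 + y^5/5 + y^7/7))
        (2 * (1 + x^2 + x^4 + x^6)) x := by
      have dp : HasDerivAt (fun y : ℝ => y + y^3/3 + y^5/5 + y^7/7)
          (1 + x^2 + x^4 + x^6) x := by
        have := (((hasDerivAt_id x).add ((hasDerivAt_pow 3 x).div_const 3)).add
          ((hasDerivAt_pow 5 x).div_const 5)).add ((hasDerivAt_pow 7 x).div_const 7)
        refine this.congr_deriv ?_
        norm_num
      exact dp.const_mul 2
    have dF : HasDerivAt F (1 / (1 + x) - (-1 / (1 - x)) - 2 * (1 + x^2 + x^4 + x^6)) x :=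
      (d1.sub d2).sub d3
    rw [dF.deriv]
    have hval : 1 / (1 + x) - (-1 / (1 - x)) - 2 * (1 + x^2 + x^4 + x^6)
        = 2 * x^8 / ((1 + x) * (1 - x)) := by
      field_simp
      ring
    rw [hval]
    have h1x : (0:ℝ) < 1 + x := by linarith
    have h2x : (0:ℝ) < 1 - x := by linarith
    positivity
  have hcont : ContinuousOn F (Set.Ico (0:ℝ) 1) := by
    apply ContinuousOn.sub
    apply ContinuousOn.sub
    · exact ((continuous_const.add continuous_id).continuousOn).log
        (fun x hx => by have := hx.1; have := hx.2; simp only [Pi.add_apply, id]; intro hc; nlinarith)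
    · exact ((continuous_const.sub continuous_id).continuousOn).log
        (fun x hx => by have := hx.1; have := hx.2; simp only [Pi.sub_apply, id]; intro hc; nlinarith)
    · have : Continuous fun x : ℝ => 2 * (x + x^3/3 + x^5/5 + x^7/7) := by
        apply continuous_const.mul
        exact ((continuous_id.add ((continuous_pow 3).div_const 3)).add
          ((continuous_pow 5).div_const 5)).add ((continuous_pow 7).div_const 7)
      exact this.continuousOn
  have hmono : StrictMonoOn F (Set.Ico (0:ℝ) 1) := by
    apply strictMonoOn_of_deriv_pos (convex_Ico 0 1) hcont
    rw [interior_Ico]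
    exact hderiv
  have h0mem : (0:ℝ) ∈ Set.Ico (0:ℝ) 1 := by constructor <;> norm_num
  have hsmem : s ∈ Set.Ico (0:ℝ) 1 := ⟨le_of_lt hs0, hs1⟩
  have hlt := hmono h0mem hsmem hs0
  have hF0 : F 0 = 0 := by simp [hF]
  have hdivlog : Real.log ((1 + s) / (1 - s)) = Real.log (1 + s) - Real.log (1 - s) :=
    Real.log_div (by nlinarith) (by nlinarith)
  rw [hF0] at hlt
  have : 0 < Real.log (1 + s) - Real.log (1 - s) - 2 * (s + s^3/3 + s^5/5 + s^7/7) := hlt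
  rw [hdivlog]
  linarith

theorem key_concavity_inequality (h : ℝ) (h0 : 0 < h) (h14 : h < 1/4) :
    -(1 + 8*h) * Real.sqrt (1 - 4*h)
      + (1 - 2*h + 16*h^2) * Real.log ((1 + Real.sqrt (1 - 4*h)) / (1 - Real.sqrt (1 - 4*h)))
      > (1/3) * (1 - 4*h)^2 * (5 - 8*h) * Real.sqrt (1 - 4*h) ∧
    -(1 + 8*h) * Real.sqrt (1 - 4*h)
      + (1 - 2*h + 16*h^2) * Real.log ((1 + Real.sqrt (1 - 4*h)) / (1 - Real.sqrt (1 - 4*h)))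
      > 0 := by
  set s := Real.sqrt (1 - 4*h) with hs
  have h4 : (0:ℝ) < 1 - 4*h := by linarith
  have hs2 : s^2 = 1 - 4*h := Real.sq_sqrt (le_of_lt h4)
  have hs0 : 0 < s := Real.sqrt_pos.2 h4
  have hs1 : s < 1 := by nlinarith
  have hL := log_ratio_lower s hs0 hs1
  have hc : (0:ℝ) < 1 - 2*h + 16*h^2 := by nlinarith [sq_nonneg (4*h - 1/4)]
  have hstep : (1 - 2*h + 16*h^2) * Real.log ((1 + s) / (1 - s))
      > (1 - 2*h + 16*h^2) * (2 * (s + s^3/3 + s^5/5 + s^7/7)) :=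
    mul_lt_mul_of_pos_left hL hc
  have hkey : -(1 + 8*h) * s + (1 - 2*h + 16*h^2) * (2 * (s + s^3/3 + s^5/5 + s^7/7))
      ≥ (1/3) * (1 - 4*h)^2 * (5 - 8*h) * s := by
    have hh : h = (1 - s^2)/4 := by linarith
    rw [hh]
    have e1 : s^7 ≤ s^5 := pow_le_pow_of_le_one (le_of_lt hs0) (le_of_lt hs1) (by norm_num)
    have e2 : s^9 ≤ s^5 := pow_le_pow_of_le_one (le_of_lt hs0) (le_of_lt hs1) (by norm_num)
    have e3 : (0:ℝ) ≤ s^11 := by positivity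
    have e4 : (0:ℝ) < s^5 := by positivity
    nlinarith [e1, e2, e3, e4]
  have hfirst : -(1 + 8*h) * s + (1 - 2*h + 16*h^2) * Real.log ((1 + s) / (1 - s))
      > (1/3) * (1 - 4*h)^2 * (5 - 8*h) * s := by linarith
  refine ⟨hfirst, ?_⟩
  have hrhs : (0:ℝ) < (1/3) * (1 - 4*h)^2 * (5 - 8*h) * s :=
    mul_pos (mul_pos (mul_pos (by norm_num) (pow_pos h4 2)) (by linarith)) hs0
  linarith
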